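/- Fix n ∈ ℕ (n ≥ 1 for the second limit) and α, β ∈ ℝ with α > −1 and β > 0. For ε > 0 set q = −e^ε, a = −e^{ε(2α+1)}, b = e^{2εβ}, and define A_n(ε) = (1−bq^{n+1})(1−abq^{n+1})/((1−abq^{2n+1})(1−abq^{2n+2})) and C_n(ε) = ab²q^{2n+1}(1−q^n)(1−aq^n)/((1−abq^{2n})(1−abq^{2n+1})). Then as ε → 0⁺ one has 1 − A_n(ε) − C_n(ε) → 0 and A_{n−1}(ε)·C_n(ε) → σ_n, where σ_{2m} = m(m+β)/((2m+α+β)(2m+α+β+1)) and σ_{2m+1} = (m+α+1)(m+α+β+1)/((2m+α+β+1)(2m+α+β+2)). -/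

import Mathlib

open Filter

/-- The recurrence coefficients `σₙ` of the monic generalized Gegenbauer polynomials. -/
noncomputable def genGegenbauerSigma (α β : ℝ) (n : ℕ) : ℝ :=
  let m : ℕ := n / 2
  if Even n then
    (m : ℝ) * ((m : ℝ) + β) / ((2 * (m : ℝ) + α + β) * (2 * (m : ℝ) + α + β + 1))
  else
    ((m : ℝ) + α + 1) * ((m : ℝ) + α + β + 1) /
      ((2 * (m : ℝ) + α + β + 1) * (2 * (m : ℝ) + α + β + 2))

section Auxiliary

lemma LQJ.split_base {ε : ℝ} (hε : ε ≠ 0) (a b : ℝ) : (a / ε) / (b / ε) = a / b := by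
  rw [div_div_eq_mul_div, div_mul_cancel₀ _ hε]

lemma LQJ.split_div {ε : ℝ} (hε : ε ≠ 0) (x y z w : ℝ) :
    x * (y / ε) / (z / ε * w) = x * y / (z * w) := by
  rw [show x * (y / ε) = x * y / ε by ring, show z / ε * w = z * w / ε by ring,
    LQJ.split_base hε]

lemma LQJ.split_div' {ε : ℝ} (hε : ε ≠ 0) (x y z w : ℝ) :
    y / ε * x / (z / ε * w) = y * x / (z * w) := by
  rw [show y / ε * x = y * x / ε by ring, show z / ε * w = z * w / ε by ring,
    LQJ.split_base hε]

lemma LQJ.split_div3 {ε : ℝ} (hε : ε ≠ 0) (p u v s t : ℝ) :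
    p * (u / ε) * v / (s * (t / ε)) = p * u * v / (s * t) := by
  rw [show p * (u / ε) * v = p * u * v / ε by ring, show s * (t / ε) = s * t / ε by ring,
    LQJ.split_base hε]

lemma LQJ.split_div4 {ε : ℝ} (hε : ε ≠ 0) (p u v s t : ℝ) :
    p * u * (v / ε) / (s * (t / ε)) = p * u * v / (s * t) := by
  rw [show p * u * (v / ε) = p * u * v / ε by ring, show s * (t / ε) = s * t / ε by ring,
    LQJ.split_base hε]

lemma LQJ.slope_lim (c : ℝ) :
    Tendsto (fun ε : ℝ => (1 - Real.exp (c * ε)) / ε) (nhdsWithin 0 (Set.Ioi 0)) (nhds (-c)) := by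
  have h : HasDerivAt (fun x : ℝ => 1 - Real.exp (c * x)) (-c) 0 := by
    have := (((hasDerivAt_id (0 : ℝ)).const_mul c).exp).const_sub 1
    simpa using this
  have h2 := hasDerivAt_iff_tendsto_slope.mp h
  have h3 : nhdsWithin (0:ℝ) (Set.Ioi 0) ≤ nhdsWithin (0:ℝ) {(0:ℝ)}ᶜ :=
    nhdsWithin_mono _ (fun x hx => ne_of_gt hx)
  refine (h2.mono_left h3).congr fun ε => ?_
  simp [slope, Real.exp_zero]; ring

/-- The limit of the coefficient `Aₙ`. -/
noncomputable def LQJ.LA (α β : ℝ) (n : ℕ) : ℝ :=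
  if Even n then ((n : ℝ) + 2*α + 2*β + 2) / (2*(n : ℝ) + 2*α + 2*β + 2)
  else ((n : ℝ) + 1 + 2*β) / (2*(n : ℝ) + 2*α + 2*β + 2)

/-- The limit of the coefficient `Cₙ`. -/
noncomputable def LQJ.LC (α β : ℝ) (n : ℕ) : ℝ :=
  if Even n then (n : ℝ) / (2*(n : ℝ) + 2*α + 2*β + 2)
  else ((n : ℝ) + 2*α + 1) / (2*(n : ℝ) + 2*α + 2*β + 2)

lemma LQJ.tendstoA (n : ℕ) (α β : ℝ) (hα : α > -1) (hβ : β > 0) :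
    Tendsto (fun ε : ℝ =>
      (1 - Real.exp (2 * ε * β) * (-Real.exp ε) ^ (n + 1)) *
        (1 - -Real.exp (ε * (2 * α + 1)) * Real.exp (2 * ε * β) * (-Real.exp ε) ^ (n + 1)) /
      ((1 - -Real.exp (ε * (2 * α + 1)) * Real.exp (2 * ε * β) * (-Real.exp ε) ^ (2 * n + 1)) *
        (1 - -Real.exp (ε * (2 * α + 1)) * Real.exp (2 * ε * β) * (-Real.exp ε) ^ (2 * n + 2))))
      (nhdsWithin 0 (Set.Ioi 0)) (nhds (LQJ.LA α β n)) := by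
  have hn0 : (0:ℝ) ≤ (n : ℝ) := Nat.cast_nonneg n
  have h3 : (0:ℝ) < 2*(n : ℝ) + 2*α + 2*β + 2 := by linarith
  have hodd1 : Odd (2*n + 1) := odd_two_mul_add_one n
  have heven2 : Even (2*n + 2) := ⟨n + 1, by ring⟩
  have e2 : ∀ ε : ℝ, Real.exp ((2*(n:ℝ) + 2*α + 2*β + 2) * ε) =
      Real.exp (ε * (2*α + 1)) * Real.exp (2*ε*β) * Real.exp ε ^ (2*n + 1) := by
    intro ε
    rw [← Real.exp_nat_mul, ← Real.exp_add, ← Real.exp_add]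
    congr 1; push_cast; ring
  have e3 : ∀ ε : ℝ, Real.exp ((2*(n:ℝ) + 2*α + 2*β + 3) * ε) =
      Real.exp (ε * (2*α + 1)) * Real.exp (2*ε*β) * Real.exp ε ^ (2*n + 2) := by
    intro ε
    rw [← Real.exp_nat_mul, ← Real.exp_add, ← Real.exp_add]
    congr 1; push_cast; ring
  rcases Nat.even_or_odd n with hn | hn
  · -- n even
    have h1 : Odd (n + 1) := Even.add_one hn
    have e1 : ∀ ε : ℝ, Real.exp (((n:ℝ) + 2*α + 2*β + 2) * ε) =
        Real.exp (ε * (2*α + 1)) * Real.exp (2*ε*β) * Real.exp ε ^ (n + 1) := by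
      intro ε
      rw [← Real.exp_nat_mul, ← Real.exp_add, ← Real.exp_add]
      congr 1; push_cast; ring
    refine Tendsto.congr'
      (f₁ := fun ε : ℝ =>
        (1 + Real.exp (2*ε*β) * Real.exp ε ^ (n + 1)) *
            ((1 - Real.exp (((n:ℝ) + 2*α + 2*β + 2) * ε)) / ε) /
          ((1 - Real.exp ((2*(n:ℝ) + 2*α + 2*β + 2) * ε)) / ε *
            (1 + Real.exp ((2*(n:ℝ) + 2*α + 2*β + 3) * ε)))) ?_ ?_
    · filter_upwards [self_mem_nhdsWithin] with ε hε
      have hε0 : ε ≠ 0 := ne_of_gt hε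
      rw [LQJ.split_div hε0, e1, e2, e3, Odd.neg_pow h1, Odd.neg_pow hodd1,
        Even.neg_pow heven2]
      ring
    · have hval : LQJ.LA α β n =
          2 * -((n:ℝ) + 2*α + 2*β + 2) / (-(2*(n:ℝ) + 2*α + 2*β + 2) * 2) := by
        simp only [LQJ.LA, if_pos hn]
        rw [div_eq_div_iff (ne_of_gt h3)
          (mul_ne_zero (neg_ne_zero.mpr (ne_of_gt h3)) two_ne_zero)]
        ring
      rw [hval]
      have hc1 : Tendsto (fun ε : ℝ => 1 + Real.exp (2*ε*β) * Real.exp ε ^ (n + 1))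
          (nhdsWithin 0 (Set.Ioi 0)) (nhds 2) := by
        have hc : Continuous fun ε : ℝ => 1 + Real.exp (2*ε*β) * Real.exp ε ^ (n + 1) := by
          fun_prop
        exact (hc.tendsto' 0 2 (by norm_num)).mono_left nhdsWithin_le_nhds
      have hc2 : Tendsto (fun ε : ℝ => 1 + Real.exp ((2*(n:ℝ) + 2*α + 2*β + 3) * ε))
          (nhdsWithin 0 (Set.Ioi 0)) (nhds 2) := by
        have hc : Continuous fun ε : ℝ => 1 + Real.exp ((2*(n:ℝ) + 2*α + 2*β + 3) * ε) := by
          fun_prop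
        exact (hc.tendsto' 0 2 (by norm_num)).mono_left nhdsWithin_le_nhds
      exact (hc1.mul (LQJ.slope_lim _)).div ((LQJ.slope_lim _).mul hc2)
        (mul_ne_zero (neg_ne_zero.mpr (ne_of_gt h3)) two_ne_zero)
  · -- n odd
    have h1 : Even (n + 1) := Odd.add_one hn
    have e1 : ∀ ε : ℝ, Real.exp (((n:ℝ) + 1 + 2*β) * ε) =
        Real.exp (2*ε*β) * Real.exp ε ^ (n + 1) := by
      intro ε
      rw [← Real.exp_nat_mul, ← Real.exp_add]
      congr 1; push_cast; ring
    refine Tendsto.congr'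
      (f₁ := fun ε : ℝ =>
        (1 - Real.exp (((n:ℝ) + 1 + 2*β) * ε)) / ε *
            (1 + Real.exp (ε * (2*α + 1)) * Real.exp (2*ε*β) * Real.exp ε ^ (n + 1)) /
          ((1 - Real.exp ((2*(n:ℝ) + 2*α + 2*β + 2) * ε)) / ε *
            (1 + Real.exp ((2*(n:ℝ) + 2*α + 2*β + 3) * ε)))) ?_ ?_
    · filter_upwards [self_mem_nhdsWithin] with ε hε
      have hε0 : ε ≠ 0 := ne_of_gt hε
      rw [LQJ.split_div' hε0, e1, e2, e3, Even.neg_pow h1, Odd.neg_pow hodd1,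
        Even.neg_pow heven2]
      ring
    · have hval : LQJ.LA α β n =
          -((n:ℝ) + 1 + 2*β) * 2 / (-(2*(n:ℝ) + 2*α + 2*β + 2) * 2) := by
        simp only [LQJ.LA, if_neg (Nat.not_even_iff_odd.mpr hn)]
        rw [div_eq_div_iff (ne_of_gt h3)
          (mul_ne_zero (neg_ne_zero.mpr (ne_of_gt h3)) two_ne_zero)]
        ring
      rw [hval]
      have hc1 : Tendsto (fun ε : ℝ =>
          1 + Real.exp (ε * (2*α + 1)) * Real.exp (2*ε*β) * Real.exp ε ^ (n + 1))
          (nhdsWithin 0 (Set.Ioi 0)) (nhds 2) := by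
        have hc : Continuous fun ε : ℝ =>
            1 + Real.exp (ε * (2*α + 1)) * Real.exp (2*ε*β) * Real.exp ε ^ (n + 1) := by
          fun_prop
        exact (hc.tendsto' 0 2 (by norm_num)).mono_left nhdsWithin_le_nhds
      have hc2 : Tendsto (fun ε : ℝ => 1 + Real.exp ((2*(n:ℝ) + 2*α + 2*β + 3) * ε))
          (nhdsWithin 0 (Set.Ioi 0)) (nhds 2) := by
        have hc : Continuous fun ε : ℝ => 1 + Real.exp ((2*(n:ℝ) + 2*α + 2*β + 3) * ε) := by
          fun_prop
        exact (hc.tendsto' 0 2 (by norm_num)).mono_left nhdsWithin_le_nhds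
      exact ((LQJ.slope_lim _).mul hc1).div ((LQJ.slope_lim _).mul hc2)
        (mul_ne_zero (neg_ne_zero.mpr (ne_of_gt h3)) two_ne_zero)

lemma LQJ.tendstoC (n : ℕ) (α β : ℝ) (hα : α > -1) (hβ : β > 0) :
    Tendsto (fun ε : ℝ =>
      -Real.exp (ε * (2 * α + 1)) * Real.exp (2 * ε * β) ^ 2 * (-Real.exp ε) ^ (2 * n + 1) *
          (1 - (-Real.exp ε) ^ n) * (1 - -Real.exp (ε * (2 * α + 1)) * (-Real.exp ε) ^ n) /
        ((1 - -Real.exp (ε * (2 * α + 1)) * Real.exp (2 * ε * β) * (-Real.exp ε) ^ (2 * n)) *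
          (1 - -Real.exp (ε * (2 * α + 1)) * Real.exp (2 * ε * β) * (-Real.exp ε) ^ (2 * n + 1))))
      (nhdsWithin 0 (Set.Ioi 0)) (nhds (LQJ.LC α β n)) := by
  have hn0 : (0:ℝ) ≤ (n : ℝ) := Nat.cast_nonneg n
  have h3 : (0:ℝ) < 2*(n : ℝ) + 2*α + 2*β + 2 := by linarith
  have hodd1 : Odd (2*n + 1) := odd_two_mul_add_one n
  have heven0 : Even (2*n) := ⟨n, two_mul n⟩
  have e2 : ∀ ε : ℝ, Real.exp ((2*(n:ℝ) + 2*α + 2*β + 2) * ε) =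
      Real.exp (ε * (2*α + 1)) * Real.exp (2*ε*β) * Real.exp ε ^ (2*n + 1) := by
    intro ε
    rw [← Real.exp_nat_mul, ← Real.exp_add, ← Real.exp_add]
    congr 1; push_cast; ring
  have hP : Tendsto (fun ε : ℝ =>
      Real.exp (ε * (2*α + 1)) * Real.exp (2*ε*β) ^ 2 * Real.exp ε ^ (2*n + 1))
      (nhdsWithin 0 (Set.Ioi 0)) (nhds 1) := by
    have hc : Continuous fun ε : ℝ =>
        Real.exp (ε * (2*α + 1)) * Real.exp (2*ε*β) ^ 2 * Real.exp ε ^ (2*n + 1) := by fun_prop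
    exact (hc.tendsto' 0 1 (by norm_num)).mono_left nhdsWithin_le_nhds
  have hd : Tendsto (fun ε : ℝ =>
      1 + Real.exp (ε * (2*α + 1)) * Real.exp (2*ε*β) * Real.exp ε ^ (2*n))
      (nhdsWithin 0 (Set.Ioi 0)) (nhds 2) := by
    have hc : Continuous fun ε : ℝ =>
        1 + Real.exp (ε * (2*α + 1)) * Real.exp (2*ε*β) * Real.exp ε ^ (2*n) := by fun_prop
    exact (hc.tendsto' 0 2 (by norm_num)).mono_left nhdsWithin_le_nhds
  rcases Nat.even_or_odd n with hn | hn
  · -- n even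
    have e0 : ∀ ε : ℝ, Real.exp ((n:ℝ) * ε) = Real.exp ε ^ n := fun ε => Real.exp_nat_mul ε n
    refine Tendsto.congr'
      (f₁ := fun ε : ℝ =>
        Real.exp (ε * (2*α + 1)) * Real.exp (2*ε*β) ^ 2 * Real.exp ε ^ (2*n + 1) *
            ((1 - Real.exp ((n:ℝ) * ε)) / ε) *
            (1 + Real.exp (ε * (2*α + 1)) * Real.exp ε ^ n) /
          ((1 + Real.exp (ε * (2*α + 1)) * Real.exp (2*ε*β) * Real.exp ε ^ (2*n)) *
            ((1 - Real.exp ((2*(n:ℝ) + 2*α + 2*β + 2) * ε)) / ε))) ?_ ?_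
    · filter_upwards [self_mem_nhdsWithin] with ε hε
      have hε0 : ε ≠ 0 := ne_of_gt hε
      rw [LQJ.split_div3 hε0, e0, e2, Even.neg_pow hn, Odd.neg_pow hodd1, Even.neg_pow heven0]
      ring
    · have hval : LQJ.LC α β n =
          1 * -(n:ℝ) * 2 / (2 * -(2*(n:ℝ) + 2*α + 2*β + 2)) := by
        simp only [LQJ.LC, if_pos hn]
        rw [div_eq_div_iff (ne_of_gt h3)
          (mul_ne_zero two_ne_zero (neg_ne_zero.mpr (ne_of_gt h3)))]
        ring
      rw [hval]
      have hc1 : Tendsto (fun ε : ℝ => 1 + Real.exp (ε * (2*α + 1)) * Real.exp ε ^ n)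
          (nhdsWithin 0 (Set.Ioi 0)) (nhds 2) := by
        have hc : Continuous fun ε : ℝ =>
            1 + Real.exp (ε * (2*α + 1)) * Real.exp ε ^ n := by fun_prop
        exact (hc.tendsto' 0 2 (by norm_num)).mono_left nhdsWithin_le_nhds
      exact ((hP.mul (LQJ.slope_lim _)).mul hc1).div (hd.mul (LQJ.slope_lim _))
        (mul_ne_zero two_ne_zero (neg_ne_zero.mpr (ne_of_gt h3)))
  · -- n odd
    have e1 : ∀ ε : ℝ, Real.exp (((n:ℝ) + 2*α + 1) * ε) =
        Real.exp (ε * (2*α + 1)) * Real.exp ε ^ n := by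
      intro ε
      rw [← Real.exp_nat_mul, ← Real.exp_add]
      congr 1; push_cast; ring
    refine Tendsto.congr'
      (f₁ := fun ε : ℝ =>
        Real.exp (ε * (2*α + 1)) * Real.exp (2*ε*β) ^ 2 * Real.exp ε ^ (2*n + 1) *
            (1 + Real.exp ε ^ n) *
            ((1 - Real.exp (((n:ℝ) + 2*α + 1) * ε)) / ε) /
          ((1 + Real.exp (ε * (2*α + 1)) * Real.exp (2*ε*β) * Real.exp ε ^ (2*n)) *
            ((1 - Real.exp ((2*(n:ℝ) + 2*α + 2*β + 2) * ε)) / ε))) ?_ ?_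
    · filter_upwards [self_mem_nhdsWithin] with ε hε
      have hε0 : ε ≠ 0 := ne_of_gt hε
      rw [LQJ.split_div4 hε0, e1, e2, Odd.neg_pow hn, Odd.neg_pow hodd1, Even.neg_pow heven0]
      ring
    · have hval : LQJ.LC α β n =
          1 * 2 * -((n:ℝ) + 2*α + 1) / (2 * -(2*(n:ℝ) + 2*α + 2*β + 2)) := by
        simp only [LQJ.LC, if_neg (Nat.not_even_iff_odd.mpr hn)]
        rw [div_eq_div_iff (ne_of_gt h3)
          (mul_ne_zero two_ne_zero (neg_ne_zero.mpr (ne_of_gt h3)))]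
        ring
      rw [hval]
      have hc1 : Tendsto (fun ε : ℝ => 1 + Real.exp ε ^ n)
          (nhdsWithin 0 (Set.Ioi 0)) (nhds 2) := by
        have hc : Continuous fun ε : ℝ => 1 + Real.exp ε ^ n := by fun_prop
        exact (hc.tendsto' 0 2 (by norm_num)).mono_left nhdsWithin_le_nhds
      exact ((hP.mul hc1).mul (LQJ.slope_lim _)).div (hd.mul (LQJ.slope_lim _))
        (mul_ne_zero two_ne_zero (neg_ne_zero.mpr (ne_of_gt h3)))

lemma LQJ.sum_eq (n : ℕ) (α β : ℝ) (hα : α > -1) (hβ : β > 0) :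
    1 - LQJ.LA α β n - LQJ.LC α β n = 0 := by
  have hn0 : (0:ℝ) ≤ (n : ℝ) := Nat.cast_nonneg n
  have h3 : (0:ℝ) < 2*(n : ℝ) + 2*α + 2*β + 2 := by linarith
  rcases Nat.even_or_odd n with hn | hn
  · simp only [LQJ.LA, LQJ.LC, if_pos hn]
    rw [sub_sub, ← add_div, sub_eq_zero, eq_div_iff h3.ne']
    ring
  · simp only [LQJ.LA, LQJ.LC, if_neg (Nat.not_even_iff_odd.mpr hn)]
    rw [sub_sub, ← add_div, sub_eq_zero, eq_div_iff h3.ne']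
    ring

lemma LQJ.prod_eq (k : ℕ) (α β : ℝ) (hα : α > -1) (hβ : β > 0) :
    LQJ.LA α β k * LQJ.LC α β (k + 1) = genGegenbauerSigma α β (k + 1) := by
  rcases Nat.even_or_odd k with hk | hk
  · obtain ⟨m, rfl⟩ := hk
    have hm0 : (0:ℝ) ≤ (m : ℝ) := Nat.cast_nonneg m
    have he : Even (m + m) := ⟨m, rfl⟩
    have hodd : ¬ Even (m + m + 1) := by simp [Nat.even_add_one, Nat.even_add]
    have hdiv : (m + m + 1) / 2 = m := by omega
    simp only [LQJ.LA, LQJ.LC, genGegenbauerSigma, he, hodd, hdiv, if_true, if_false, iff_true,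
      eq_self_iff_true]
    push_cast
    rw [div_mul_div_comm, div_eq_div_iff
      (mul_ne_zero (by intro h; nlinarith) (by intro h; nlinarith))
      (mul_ne_zero (by intro h; nlinarith) (by intro h; nlinarith))]
    ring
  · obtain ⟨m, rfl⟩ := hk
    have hm0 : (0:ℝ) ≤ (m : ℝ) := Nat.cast_nonneg m
    have hodd : ¬ Even (2*m + 1) := by simp [Nat.even_add_one]
    have heven : Even (2*m + 1 + 1) := ⟨m + 1, by ring⟩
    have hdiv : (2*m + 1 + 1) / 2 = m + 1 := by omega
    simp only [LQJ.LA, LQJ.LC, genGegenbauerSigma, hodd, heven, hdiv, if_true, if_false,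
      iff_true, eq_self_iff_true]
    push_cast
    rw [div_mul_div_comm, div_eq_div_iff
      (mul_ne_zero (by intro h; nlinarith) (by intro h; nlinarith))
      (mul_ne_zero (by intro h; nlinarith) (by intro h; nlinarith))]
    ring

end Auxiliary

/-- the `q → -1` limit (`q = -e^ε`, `a = -e^{ε(2α+1)}`, `b = e^{2εβ}`) of the
monic little `q`-Jacobi recurrence coefficients yields the recurrence coefficients of the
monic generalized Gegenbauer polynomials: `1 - Aₙ - Cₙ → 0` and `Aₙ₋₁ Cₙ → σₙ`. -/
theorem littleQJacobi_to_genGegenbauer_recurrence_limit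
    (n : ℕ) (α β : ℝ) (hα : α > -1) (hβ : β > 0) :
    Tendsto (fun ε : ℝ =>
        let q := -Real.exp ε;
        let a := -Real.exp (ε * (2 * α + 1));
        let b := Real.exp (2 * ε * β);
        1 - (1 - b * q ^ (n + 1)) * (1 - a * b * q ^ (n + 1)) /
              ((1 - a * b * q ^ (2 * n + 1)) * (1 - a * b * q ^ (2 * n + 2))) -
          a * b ^ 2 * q ^ (2 * n + 1) * (1 - q ^ n) * (1 - a * q ^ n) /
            ((1 - a * b * q ^ (2 * n)) * (1 - a * b * q ^ (2 * n + 1))))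
      (nhdsWithin 0 (Set.Ioi 0)) (nhds 0) ∧
    (1 ≤ n →
      Tendsto (fun ε : ℝ =>
          let q := -Real.exp ε;
          let a := -Real.exp (ε * (2 * α + 1));
          let b := Real.exp (2 * ε * β);
          ((1 - b * q ^ (n - 1 + 1)) * (1 - a * b * q ^ (n - 1 + 1)) /
              ((1 - a * b * q ^ (2 * (n - 1) + 1)) * (1 - a * b * q ^ (2 * (n - 1) + 2)))) *
            (a * b ^ 2 * q ^ (2 * n + 1) * (1 - q ^ n) * (1 - a * q ^ n) /
              ((1 - a * b * q ^ (2 * n)) * (1 - a * b * q ^ (2 * n + 1)))))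
        (nhdsWithin 0 (Set.Ioi 0)) (nhds (genGegenbauerSigma α β n))) := by
  constructor
  · have h := ((tendsto_const_nhds : Tendsto (fun _ : ℝ => (1:ℝ)) (nhdsWithin 0 (Set.Ioi 0)) (nhds 1)).sub
      (LQJ.tendstoA n α β hα hβ)).sub (LQJ.tendstoC n α β hα hβ)
    rw [LQJ.sum_eq n α β hα hβ] at h
    exact h
  · intro hn
    obtain ⟨k, rfl⟩ : ∃ k, n = k + 1 := ⟨n - 1, (Nat.succ_pred_eq_of_pos hn).symm⟩
    have h := (LQJ.tendstoA k α β hα hβ).mul (LQJ.tendstoC (k + 1) α β hα hβ)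
    rw [LQJ.prod_eq k α β hα hβ] at h
    exact h
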